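/- The Christoffel symbols of the Levi-Civita connection of the Fisher-Rao metric on the open simplex in exponential coordinates are Γ^i_{jk}(θ) = (1/2)(δ^i_j δ_{jk} − δ^i_j p_k(θ) − δ^i_k p_j(θ)), where p_i(θ) = e^{θ^i − ψ(θ)}. -/

import Mathlib

noncomputable def psiFn (𝔠 : ℕ) (θ : Fin 𝔠 → ℝ) : ℝ :=
  Real.log (1 + ∑ j, Real.exp (θ j))

noncomputable def pFn (𝔠 : ℕ) (i : Fin 𝔠) (θ : Fin 𝔠 → ℝ) : ℝ :=
  Real.exp (θ i - psiFn 𝔠 θ)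

/-- Fisher-Rao metric matrix 𝔤(θ) with 𝔤_{ij} = δ_{ij} p_i − p_i p_j. -/
noncomputable def frMatrix (𝔠 : ℕ) (θ : Fin 𝔠 → ℝ) : Matrix (Fin 𝔠) (Fin 𝔠) ℝ :=
  Matrix.of fun i j => (if i = j then pFn 𝔠 i θ else 0) - pFn 𝔠 i θ * pFn 𝔠 j θ

/-- Third partial derivative ∂_l ∂_j ∂_k ψ. -/
noncomputable def psi3 (𝔠 : ℕ) (l j k : Fin 𝔠) (θ : Fin 𝔠 → ℝ) : ℝ :=
  fderiv ℝ (fun θ'' =>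
    fderiv ℝ (fun θ' => fderiv ℝ (psiFn 𝔠) θ' (Pi.single k 1)) θ'' (Pi.single j 1))
    θ (Pi.single l 1)

open ContinuousLinearMap Real

section aux
variable (𝔠 : ℕ) (θ : Fin 𝔠 → ℝ)

lemma Zpos : (0:ℝ) < 1 + ∑ j, Real.exp (θ j) := by
  positivity

lemma pFn_eq (i : Fin 𝔠) :
    pFn 𝔠 i θ = Real.exp (θ i) / (1 + ∑ j, Real.exp (θ j)) := by
  rw [pFn, Real.exp_sub, psiFn, Real.exp_log (Zpos 𝔠 θ)]

lemma pFn_pos (i : Fin 𝔠) : 0 < pFn 𝔠 i θ := Real.exp_pos _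

/-- The derivative of ψ. -/
noncomputable def psid : (Fin 𝔠 → ℝ) →L[ℝ] ℝ :=
  ∑ m, pFn 𝔠 m θ • (ContinuousLinearMap.proj m)

lemma psid_apply_single (j : Fin 𝔠) : psid 𝔠 θ (Pi.single j 1) = pFn 𝔠 j θ := by
  simp [psid, ContinuousLinearMap.sum_apply, Pi.single_apply]

lemma hasFDerivAt_psiFn : HasFDerivAt (psiFn 𝔠) (psid 𝔠 θ) θ := by
  have hZ : HasFDerivAt (fun θ' : Fin 𝔠 → ℝ => 1 + ∑ j, Real.exp (θ' j))
      (∑ m, Real.exp (θ m) • (ContinuousLinearMap.proj m : (Fin 𝔠 → ℝ) →L[ℝ] ℝ)) θ := by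
    simpa [Finset.sum_fn] using
      (HasFDerivAt.sum (u := Finset.univ) fun m _ => (hasFDerivAt_apply (𝕜 := ℝ) m θ).exp)
  have hlog := hZ.log (ne_of_gt (Zpos 𝔠 θ))
  have heq : ((1 + ∑ j, Real.exp (θ j))⁻¹
        • ∑ m, Real.exp (θ m) • (ContinuousLinearMap.proj m : (Fin 𝔠 → ℝ) →L[ℝ] ℝ))
      = psid 𝔠 θ := by
    ext v
    simp only [psid, ContinuousLinearMap.sum_apply, ContinuousLinearMap.smul_apply,
      smul_eq_mul, ContinuousLinearMap.proj_apply]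
    rw [Finset.mul_sum]
    refine Finset.sum_congr rfl fun m _ => ?_
    rw [pFn_eq]
    ring
  rw [← heq]
  exact hlog

lemma fderiv_psi_single (k : Fin 𝔠) :
    fderiv ℝ (psiFn 𝔠) θ (Pi.single k 1) = pFn 𝔠 k θ := by
  rw [(hasFDerivAt_psiFn 𝔠 θ).fderiv, psid_apply_single]

lemma hasFDerivAt_pFn (k : Fin 𝔠) :
    HasFDerivAt (pFn 𝔠 k)
      (pFn 𝔠 k θ • ((ContinuousLinearMap.proj k : (Fin 𝔠 → ℝ) →L[ℝ] ℝ) - psid 𝔠 θ)) θ := by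
  have h : HasFDerivAt (fun θ' : Fin 𝔠 → ℝ => θ' k - psiFn 𝔠 θ')
      ((ContinuousLinearMap.proj k : (Fin 𝔠 → ℝ) →L[ℝ] ℝ) - psid 𝔠 θ) θ :=
    (hasFDerivAt_apply k θ).sub (hasFDerivAt_psiFn 𝔠 θ)
  exact h.exp

lemma fderiv_pFn_single (k j : Fin 𝔠) :
    fderiv ℝ (pFn 𝔠 k) θ (Pi.single j 1)
      = pFn 𝔠 k θ * ((if k = j then 1 else 0) - pFn 𝔠 j θ) := by
  rw [(hasFDerivAt_pFn 𝔠 θ k).fderiv]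
  simp [psid_apply_single, Pi.single_apply]

lemma psi3_eq (l j k : Fin 𝔠) :
    psi3 𝔠 l j k θ
      = ((if k = j then 1 else 0) - pFn 𝔠 j θ) * frMatrix 𝔠 θ l k
        - pFn 𝔠 k θ * frMatrix 𝔠 θ l j := by
  have h1 : (fun θ' => fderiv ℝ (psiFn 𝔠) θ' (Pi.single k 1)) = pFn 𝔠 k := by
    funext θ'; exact fderiv_psi_single 𝔠 θ' k
  have h2 : (fun θ'' => fderiv ℝ (fun θ' => fderiv ℝ (psiFn 𝔠) θ' (Pi.single k 1)) θ''
      (Pi.single j 1))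
      = fun θ'' => pFn 𝔠 k θ'' * ((if k = j then 1 else 0) - pFn 𝔠 j θ'') := by
    funext θ''; rw [h1]; exact fderiv_pFn_single 𝔠 θ'' k j
  have hH : HasFDerivAt
      (fun θ'' => pFn 𝔠 k θ'' * ((if k = j then 1 else 0) - pFn 𝔠 j θ''))
      (pFn 𝔠 k θ • ((0 : (Fin 𝔠 → ℝ) →L[ℝ] ℝ)
          - pFn 𝔠 j θ • ((ContinuousLinearMap.proj j : (Fin 𝔠 → ℝ) →L[ℝ] ℝ) - psid 𝔠 θ))
        + ((if k = j then 1 else 0) - pFn 𝔠 j θ)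
          • (pFn 𝔠 k θ • ((ContinuousLinearMap.proj k : (Fin 𝔠 → ℝ) →L[ℝ] ℝ) - psid 𝔠 θ))) θ :=
    (hasFDerivAt_pFn 𝔠 θ k).mul
      ((hasFDerivAt_const _ θ).sub (hasFDerivAt_pFn 𝔠 θ j))
  rw [psi3, h2, hH.fderiv]
  have hj : pFn 𝔠 k θ * ((if k = l then 1 else 0) - pFn 𝔠 l θ) = frMatrix 𝔠 θ l k := by
    simp only [frMatrix, Matrix.of_apply]
    rcases eq_or_ne l k with h | h
    · subst h; simp; ring
    · simp [h, Ne.symm h]; ring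
  have hj' : pFn 𝔠 j θ * ((if j = l then 1 else 0) - pFn 𝔠 l θ) = frMatrix 𝔠 θ l j := by
    simp only [frMatrix, Matrix.of_apply]
    rcases eq_or_ne l j with h | h
    · subst h; simp; ring
    · simp [h, Ne.symm h]; ring
  simp only [ContinuousLinearMap.add_apply, ContinuousLinearMap.smul_apply,
    ContinuousLinearMap.sub_apply, ContinuousLinearMap.zero_apply, smul_eq_mul,
    ContinuousLinearMap.proj_apply, psid_apply_single, Pi.single_apply]
  rw [← hj, ← hj']
  ring

/-- Explicit inverse of the Fisher-Rao matrix. -/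
noncomputable def frInv : Matrix (Fin 𝔠) (Fin 𝔠) ℝ :=
  Matrix.of fun i l => (if i = l then (pFn 𝔠 i θ)⁻¹ else 0) + (1 + ∑ j, Real.exp (θ j))

lemma sum_pFn : ∑ l, pFn 𝔠 l θ
    = (∑ l, Real.exp (θ l)) / (1 + ∑ j, Real.exp (θ j)) := by
  simp only [pFn_eq]
  rw [← Finset.sum_div]

lemma frInv_mul : frInv 𝔠 θ * frMatrix 𝔠 θ = 1 := by
  ext i k
  rw [Matrix.mul_apply]
  simp only [frInv, frMatrix, Matrix.of_apply]
  have hsplit : ∀ l : Fin 𝔠,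
      ((if i = l then (pFn 𝔠 i θ)⁻¹ else 0) + (1 + ∑ j, Real.exp (θ j)))
        * ((if l = k then pFn 𝔠 l θ else 0) - pFn 𝔠 l θ * pFn 𝔠 k θ)
      = (if i = l then (pFn 𝔠 i θ)⁻¹ * ((if l = k then pFn 𝔠 l θ else 0)
            - pFn 𝔠 l θ * pFn 𝔠 k θ) else 0)
        + (1 + ∑ j, Real.exp (θ j))
            * ((if l = k then pFn 𝔠 l θ else 0) - pFn 𝔠 l θ * pFn 𝔠 k θ) := by
    intro l
    rcases eq_or_ne i l with h | h <;> simp [h] <;> ring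
  rw [Finset.sum_congr rfl fun l _ => hsplit l, Finset.sum_add_distrib,
    Finset.sum_ite_eq, ← Finset.mul_sum]
  have hsum : ∑ l, ((if l = k then pFn 𝔠 l θ else 0) - pFn 𝔠 l θ * pFn 𝔠 k θ)
      = pFn 𝔠 k θ - (∑ l, pFn 𝔠 l θ) * pFn 𝔠 k θ := by
    rw [Finset.sum_sub_distrib, Finset.sum_ite_eq', ← Finset.sum_mul]
    simp
  rw [hsum, sum_pFn]
  have hZ := Zpos 𝔠 θ
  have hp := pFn_pos 𝔠 θ i
  have hpk := pFn_eq 𝔠 θ k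
  rcases eq_or_ne i k with h | h
  · subst h
    simp only [if_pos rfl, Finset.mem_univ, Matrix.one_apply_eq, if_true]
    field_simp
    ring
  · simp only [if_neg h, Finset.mem_univ, if_pos, Matrix.one_apply_ne h]
    field_simp
    ring

lemma frMatrix_inv_mul_self :
    (frMatrix 𝔠 θ)⁻¹ * frMatrix 𝔠 θ = 1 := by
  rw [Matrix.inv_eq_left_inv (frInv_mul 𝔠 θ)]
  exact frInv_mul 𝔠 θ

end aux

/-- The Christoffel symbols of the second kind of the Fisher-Rao metric in
    exponential coordinates, Γ^i_{jk} = (1/2) 𝔤^{il} ∂_l∂_j∂_k ψ, equal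
    (1/2)(δ^i_j δ_{jk} − δ^i_j p_k − δ^i_k p_j). -/
theorem christoffel_second_kind_fisherRao (𝔠 : ℕ) (θ : Fin 𝔠 → ℝ) (i j k : Fin 𝔠) :
    (1 / 2) * ∑ l, (frMatrix 𝔠 θ)⁻¹ i l * psi3 𝔠 l j k θ
      = (1 / 2) * ((if i = j then (if j = k then (1 : ℝ) else 0) else 0)
          - (if i = j then (1 : ℝ) else 0) * pFn 𝔠 k θ
          - (if i = k then (1 : ℝ) else 0) * pFn 𝔠 j θ) := by
  have hsum : ∑ l, (frMatrix 𝔠 θ)⁻¹ i l * psi3 𝔠 l j k θ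
      = ((if k = j then 1 else 0) - pFn 𝔠 j θ)
          * ∑ l, (frMatrix 𝔠 θ)⁻¹ i l * frMatrix 𝔠 θ l k
        - pFn 𝔠 k θ * ∑ l, (frMatrix 𝔠 θ)⁻¹ i l * frMatrix 𝔠 θ l j := by
    rw [Finset.mul_sum, Finset.mul_sum, ← Finset.sum_sub_distrib]
    refine Finset.sum_congr rfl fun l _ => ?_
    rw [psi3_eq]
    ring
  have hid : ∀ m : Fin 𝔠, ∑ l, (frMatrix 𝔠 θ)⁻¹ i l * frMatrix 𝔠 θ l m
      = if i = m then 1 else 0 := by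
    intro m
    have := congrFun (congrFun (frMatrix_inv_mul_self 𝔠 θ) i) m
    rw [Matrix.mul_apply] at this
    rw [this, Matrix.one_apply]
  rw [hsum, hid, hid]
  rcases eq_or_ne i j with hij | hij <;> rcases eq_or_ne i k with hik | hik <;>
    rcases eq_or_ne j k with hjk | hjk <;>
    simp_all <;> ring
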